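/- arXiv:1403.7759 — 3 statements merged into one kernel-verified Lean document; each statement's English description precedes it below -/
import Mathlib

section
/- For every natural number n, ∑_{k=0}^{n} (-1)^k / ((n-k)! ) * (2k+1)!! / (k! (k+1)!) equals (-1)^n / √(n! (n+1)!) * (√(n+1) * (n-1)!!/n!!)^{(-1)^n}, where (2m)!! = 2^m m! and (2m+1)!! = (2m+1)!/(2^m m!). -/
lemma key1 (k : ℕ) : (2*k+3).choose (k+1) * (k+2) = 2*(2*k+3)*((2*k+1).choose k) := by
  have h1 : (2*k+3).choose (k+1) = (2*k+3).choose (k+2) :=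
    Nat.choose_symm_of_eq_add (by omega)
  have h2 : (2*k+2+1) * Nat.choose (2*k+2) (k+1) = Nat.choose (2*k+3) (k+2) * (k+2) :=
    Nat.add_one_mul_choose_eq (2*k+2) (k+1)
  have h3 : (2*k+2).choose (k+1) = (2*k+1).choose k + (2*k+1).choose (k+1) :=
    Nat.choose_succ_succ' (2*k+1) k
  have h4 : (2*k+1).choose (k+1) = (2*k+1).choose k :=
    Nat.choose_symm_of_eq_add (by omega)
  rw [h1, ← h2, h3, h4]; ring

lemma natkey (n k : ℕ) :
    (n+2)*(n+3)*((n+2).choose k) + (n+2)*((n+1).choose k)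
      = (n+1)*(n+2)*(n.choose k) + (k+1)*(2*k+3)*((n+2).choose (k+1))
        + k*(k+1)*((n+2).choose k) := by
  have h1 : (n+2).choose (k+1) * (k+1) = (n+2).choose k * (n+2-k) :=
    Nat.choose_succ_right_eq (n+2) k
  have h2 : (n+1).choose k * (n+2) = (n+2).choose k * (n+2-k) :=
    Nat.choose_mul_succ_eq (n+1) k
  have h3 : n.choose k * (n+1) = (n+1).choose k * (n+1-k) :=
    Nat.choose_mul_succ_eq n k
  rcases le_or_gt k n with hk | hk
  · obtain ⟨d, rfl⟩ : ∃ d, n = k + d := ⟨n-k, by omega⟩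
    have e1 : k + d + 2 - k = d + 2 := by omega
    have e2 : k + d + 1 - k = d + 1 := by omega
    rw [e1] at h1 h2; rw [e2] at h3
    zify at h1 h2 h3 ⊢
    linear_combination (-(2*(k:ℤ)+3))*h1 + (-(d:ℤ))*h2 + (-((k:ℤ)+(d:ℤ)+2))*h3
  · rcases le_or_gt k (n+2) with hk2 | hk2
    · rcases le_or_gt k (n+1) with hk1 | hk1
      · have ek : k = n + 1 := by omega
        subst ek
        simp [Nat.choose_succ_self_right, Nat.choose_self, Nat.choose_eq_zero_of_lt]
        ring
      · have ek : k = n + 2 := by omega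
        subst ek
        simp [Nat.choose_self, Nat.choose_eq_zero_of_lt]
    · rw [Nat.choose_eq_zero_of_lt hk2, Nat.choose_eq_zero_of_lt (by omega),
        Nat.choose_eq_zero_of_lt (by omega), Nat.choose_eq_zero_of_lt (by omega)]
      ring

noncomputable def Fk (m k : ℕ) : ℝ := (-1)^k * (m.choose k) * ((2*k+1).choose k) / 2^k
noncomputable def Gk (n k : ℕ) : ℝ :=
  (-1)^(k+1) * (k*(k+1)) * ((n+2).choose k) * ((2*k+1).choose k) / 2^k

lemma star (n k : ℕ) :
    (n+2)*(n+3) * Fk (n+2) k + (n+2) * Fk (n+1) k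
      = (n+1)*(n+2) * Fk n k + (Gk n (k+1) - Gk n k) := by
  have hkey := congrArg (Nat.cast (R:=ℝ)) (natkey n k)
  have hk1 := congrArg (Nat.cast (R:=ℝ)) (key1 k)
  have h2 : (2:ℝ)^k ≠ 0 := by positivity
  unfold Fk Gk
  push_cast at hkey hk1
  have e : 2*(k+1)+1 = 2*k+3 := by ring
  rw [e]
  push_cast
  linear_combination ((-1:ℝ)^k * ((2*k+1).choose k : ℝ) / 2^k) * hkey -
    (((k:ℝ)+1) * (((n+2).choose (k+1) : ℕ) : ℝ) * (-1)^k / (2*2^k)) * hk1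

noncomputable def V (m : ℕ) : ℝ := ∑ k ∈ Finset.range (m+1), Fk m k

lemma Fk_zero {m k : ℕ} (h : m < k) : Fk m k = 0 := by
  unfold Fk
  rw [Nat.choose_eq_zero_of_lt h]
  simp

lemma Vrec (n : ℕ) :
    (n+2)*(n+3) * V (n+2) + (n+2) * V (n+1) = (n+1)*(n+2) * V n := by
  have hV2 : V (n+2) = ∑ k ∈ Finset.range (n+3), Fk (n+2) k := rfl
  have hV1 : V (n+1) = ∑ k ∈ Finset.range (n+3), Fk (n+1) k := by
    rw [Finset.sum_range_succ, Fk_zero (by omega)]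
    simp [V]
  have hV0 : V n = ∑ k ∈ Finset.range (n+3), Fk n k := by
    rw [Finset.sum_range_succ, Finset.sum_range_succ, Fk_zero (by omega),
      Fk_zero (by omega)]
    simp [V]
  have htel : ∑ k ∈ Finset.range (n+3), (Gk n (k+1) - Gk n k) = Gk n (n+3) - Gk n 0 :=
    Finset.sum_range_sub (Gk n) (n+3)
  have hG0 : Gk n 0 = 0 := by simp [Gk]
  have hGtop : Gk n (n+3) = 0 := by
    unfold Gk
    rw [Nat.choose_eq_zero_of_lt (by omega)]
    simp
  have hsum : ∑ k ∈ Finset.range (n+3),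
      ((n+2)*(n+3) * Fk (n+2) k + (n+2) * Fk (n+1) k - (n+1)*(n+2) * Fk n k) = 0 := by
    have : ∀ k ∈ Finset.range (n+3),
        (n+2)*(n+3) * Fk (n+2) k + (n+2) * Fk (n+1) k - (n+1)*(n+2) * Fk n k
          = Gk n (k+1) - Gk n k := by
      intro k _
      have := star n k
      linarith
    rw [Finset.sum_congr rfl this, htel, hG0, hGtop]
    ring
  rw [Finset.sum_sub_distrib, Finset.sum_add_distrib, ← Finset.mul_sum, ← Finset.mul_sum,
    ← Finset.mul_sum] at hsum
  rw [hV2, hV1, hV0]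
  linarith

lemma realkey2 (n : ℕ) :
    4*((n:ℝ)+1)*(n.choose (n/2)) + 2*((n+1).choose ((n+1)/2))
      = ((n:ℝ)+3)*((n+2).choose ((n+2)/2)) := by
  rcases Nat.even_or_odd n with ⟨m, hm⟩ | ⟨m, hm⟩
  · subst hm
    have e0 : (m + m) / 2 = m := by omega
    have e1 : (m + m + 1) / 2 = m := by omega
    have e2 : (m + m + 2) / 2 = m + 1 := by omega
    rw [e0, e1, e2]
    have hY : ((2*m+1).choose (m+1) : ℝ) * (m+1) = (2*m+1) * ((2*m).choose m) := by
      exact_mod_cast congrArg (Nat.cast (R:=ℝ)) (Nat.add_one_mul_choose_eq (2*m) m).symm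
    have hsym : (2*m+1).choose (m+1) = (2*m+1).choose m :=
      Nat.choose_symm_of_eq_add (by omega)
    have hP : ((2*m+2).choose (m+1) : ℝ) = 2 * ((2*m+1).choose m) := by
      have h := Nat.choose_succ_succ' (2*m+1) m
      rw [hsym] at h
      rw [show (2*m+2 : ℕ) = 2*m+1+1 from by omega, h]
      push_cast; ring
    rw [hsym] at hY
    rw [show m+m+1 = 2*m+1 from by omega, show m+m+2 = 2*m+2 from by omega,
      show m+m = 2*m from by omega]
    push_cast
    linear_combination (-4:ℝ)*hY - (2*(m:ℝ)+3)*hP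
  · subst hm
    have e0 : (2*m + 1) / 2 = m := by omega
    have e1 : (2*m + 1 + 1) / 2 = m + 1 := by omega
    have e2 : (2*m + 1 + 2) / 2 = m + 1 := by omega
    rw [e0, e1, e2]
    have hsym : (2*m+1).choose (m+1) = (2*m+1).choose m :=
      Nat.choose_symm_of_eq_add (by omega)
    have hP : ((2*m+1+1).choose (m+1) : ℝ) = 2 * ((2*m+1).choose m) := by
      have h := Nat.choose_succ_succ' (2*m+1) m
      rw [hsym] at h
      rw [h]; push_cast; ring
    have hQ : ((2*m+3).choose (m+1) : ℝ) * (m+2) = 2*(2*(m:ℝ)+3) * ((2*m+1).choose m) := by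
      exact_mod_cast congrArg (Nat.cast (R:=ℝ)) (key1 m)
    rw [show (2*m+1+2 : ℕ) = 2*m+3 from by omega]
    push_cast
    linear_combination (2:ℝ)*hP - 2*hQ

lemma closed (n : ℕ) : (2:ℝ)^n * V n = (-1)^n * (n.choose (n/2)) := by
  induction n using Nat.twoStepInduction with
  | zero => simp [V, Fk]
  | one =>
    rw [V]
    rw [Finset.sum_range_succ, Finset.sum_range_succ, Finset.sum_range_zero]
    norm_num [Fk]
  | more n ih0 ih1 =>
    have hrec := Vrec n
    have hk2 := realkey2 n
    have h3 : ((n:ℝ)+3) ≠ 0 := by positivity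
    have h2 : ((n:ℝ)+2) ≠ 0 := by positivity
    -- (n+3) V(n+2) = (n+1) V n - V (n+1)
    have hstep : ((n:ℝ)+3) * V (n+2) = ((n:ℝ)+1) * V n - V (n+1) := by
      field_simp at hrec
      apply mul_left_cancel₀ h2
      linear_combination ((n:ℝ)+2) * hrec
    have hgoal : ((n:ℝ)+3) * ((2:ℝ)^(n+2) * V (n+2))
        = ((n:ℝ)+3) * ((-1)^(n+2) * ((n+2).choose ((n+2)/2))) := by
      have : ((n:ℝ)+3) * ((2:ℝ)^(n+2) * V (n+2))
          = 4*((n:ℝ)+1) * ((2:ℝ)^n * V n) - 2 * ((2:ℝ)^(n+1) * V (n+1)) := by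
        rw [pow_succ, pow_succ]
        linear_combination (4*(2:ℝ)^n) * hstep
      rw [this, ih0, ih1]
      have hsg : ((-1:ℝ))^(n+2) = (-1)^n := by
        rw [pow_succ, pow_succ]; ring
      have hsg1 : ((-1:ℝ))^(n+1) = -(-1)^n := by
        rw [pow_succ]; ring
      rw [hsg, hsg1]
      linear_combination ((-1:ℝ))^n * hk2
    exact mul_left_cancel₀ h3 hgoal

lemma lhs_eq (n : ℕ) :
    ∑ k ∈ Finset.range (n + 1),
      (-1 : ℝ) ^ k / (Nat.factorial (n - k)) * (Nat.doubleFactorial (2 * k + 1)) /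
        (Nat.factorial k * Nat.factorial (k + 1))
    = V n / n.factorial := by
  rw [V, Finset.sum_div]
  refine Finset.sum_congr rfl fun k hk => ?_
  have hkn : k ≤ n := by
    simp only [Finset.mem_range] at hk; omega
  have hch : (n.choose k : ℝ) = n.factorial / (k.factorial * (n-k).factorial) :=
    Nat.cast_choose ℝ hkn
  have hE : ((2*k+1).choose k : ℝ) = (2*k+1).factorial / (k.factorial * (k+1).factorial) := by
    have h := Nat.cast_choose ℝ (show k ≤ 2*k+1 by omega)
    rwa [show 2*k+1-k = k+1 from by omega] at h
  have hdf : ((2*k+1).doubleFactorial : ℝ) * (2^k * k.factorial) = (2*k+1).factorial := by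
    have h1 : (2*k+1).factorial = (2*k+1).doubleFactorial * (2*k).doubleFactorial :=
      Nat.factorial_eq_mul_doubleFactorial (2*k)
    have h2 : (2*k).doubleFactorial = 2^k * k.factorial := Nat.doubleFactorial_two_mul k
    rw [h2] at h1
    exact_mod_cast congrArg (Nat.cast (R:=ℝ)) h1.symm
  have hD : ((2*k+1).doubleFactorial : ℝ) = (2*k+1).factorial / (2^k * k.factorial) := by
    rw [← hdf]
    field_simp
  unfold Fk
  rw [hch, hE, hD]
  have p1 : (k.factorial : ℝ) ≠ 0 := by exact_mod_cast k.factorial_ne_zero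
  have p2 : ((n-k).factorial : ℝ) ≠ 0 := by exact_mod_cast (n-k).factorial_ne_zero
  have p3 : ((k+1).factorial : ℝ) ≠ 0 := by exact_mod_cast (k+1).factorial_ne_zero
  have p4 : (n.factorial : ℝ) ≠ 0 := by exact_mod_cast n.factorial_ne_zero
  have p5 : (2:ℝ)^k ≠ 0 := by positivity
  field_simp

lemma sqrt_fact (n : ℕ) :
    Real.sqrt ((n.factorial : ℝ) * ((n+1).factorial : ℝ))
      = (n.factorial : ℝ) * Real.sqrt ((n:ℝ)+1) := by
  have h : ((n+1).factorial : ℝ) = ((n:ℝ)+1) * n.factorial := by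
    rw [Nat.factorial_succ]; push_cast; ring
  rw [h, show (n.factorial : ℝ) * (((n:ℝ)+1) * n.factorial) = (n.factorial : ℝ)^2 * ((n:ℝ)+1) from by ring,
    Real.sqrt_mul (by positivity), Real.sqrt_sq (by positivity)]

theorem samoletov_sum (n : ℕ) :
    ∑ k ∈ Finset.range (n + 1),
      (-1 : ℝ) ^ k / (Nat.factorial (n - k)) * (Nat.doubleFactorial (2 * k + 1)) /
        (Nat.factorial k * Nat.factorial (k + 1))
    = (-1 : ℝ) ^ n / Real.sqrt (Nat.factorial n * Nat.factorial (n + 1)) *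
        (Real.sqrt (n + 1) * (Nat.doubleFactorial (n - 1)) / (Nat.doubleFactorial n))
          ^ ((-1 : ℤ) ^ n) := by
  rw [lhs_eq]
  have hc := closed n
  have h2n : (2:ℝ)^n ≠ 0 := by positivity
  have hV : V n = (-1)^n * (n.choose (n/2)) / 2^n := by
    field_simp at hc ⊢
    linarith [hc]
  rw [hV, sqrt_fact]
  have hfn : (n.factorial : ℝ) ≠ 0 := by exact_mod_cast n.factorial_ne_zero
  rcases Nat.even_or_odd n with he | ho
  · -- even case
    have hp1 : ((-1:ℤ))^n = 1 := Even.neg_one_pow he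
    have hp2 : ((-1:ℝ))^n = 1 := Even.neg_one_pow he
    obtain ⟨m, rfl⟩ := he
    rw [hp1, hp2, zpow_one]
    rcases Nat.eq_zero_or_pos m with rfl | hm
    · norm_num [Nat.doubleFactorial]
    obtain ⟨j, rfl⟩ : ∃ j, m = j + 1 := ⟨m - 1, by omega⟩
    rw [show j+1+(j+1) = 2*j+2 from by omega]
    rw [show 2*j+2-1 = 2*j+1 from by omega, show (2*j+2)/2 = j+1 from by omega]
    set s := Real.sqrt ((2*j+2 : ℕ) + 1 : ℝ) with hsdef
    have hs0 : (0:ℝ) < s := by rw [hsdef]; apply Real.sqrt_pos.mpr; positivity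
    have hA : (((2*j+2)).doubleFactorial : ℝ) = 2^(j+1) * (j+1).factorial := by
      rw [show 2*j+2 = 2*(j+1) from by ring, Nat.doubleFactorial_two_mul]
      push_cast; ring
    have hB : (((2*j+2).factorial) : ℝ)
        = ((2*j+2).doubleFactorial : ℝ) * ((2*j+1).doubleFactorial : ℝ) := by
      exact_mod_cast congrArg (Nat.cast (R:=ℝ)) (Nat.factorial_eq_mul_doubleFactorial (2*j+1))
    have hC : (((2*j+2).choose (j+1)) : ℝ)
        = ((2*j+2).factorial : ℝ) / ((j+1).factorial * (j+1).factorial) := by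
      have h := Nat.cast_choose ℝ (show j+1 ≤ 2*j+2 by omega)
      rwa [show 2*j+2-(j+1) = j+1 from by omega] at h
    have hdf0 : ((2*j+1).doubleFactorial : ℝ) ≠ 0 := by
      exact_mod_cast (Nat.doubleFactorial_pos _).ne'
    have hdf1 : ((2*j+2).doubleFactorial : ℝ) ≠ 0 := by
      exact_mod_cast (Nat.doubleFactorial_pos _).ne'
    have hfj : ((j+1).factorial : ℝ) ≠ 0 := by exact_mod_cast (j+1).factorial_ne_zero
    have hf2 : ((2*j+2).factorial : ℝ) ≠ 0 := by exact_mod_cast (2*j+2).factorial_ne_zero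
    rw [hC, hA]
    field_simp
    linear_combination ((2:ℝ)^(j+1))*hB +
      ((2:ℝ)^(j+1)*((2*j+1).doubleFactorial:ℝ))*hA
  · -- odd case
    have hp2 : ((-1:ℝ))^n = -1 := Odd.neg_one_pow ho
    obtain ⟨m, rfl⟩ := ho
    rw [show ((-1:ℤ))^(2*m+1) = -1 from Odd.neg_one_pow ⟨m, rfl⟩, hp2]
    rw [zpow_neg, zpow_one]
    rw [show 2*m+1-1 = 2*m from by omega, show (2*m+1)/2 = m from by omega]
    set s := Real.sqrt ((2*m+1 : ℕ) + 1 : ℝ) with hsdef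
    have hs0 : (0:ℝ) < s := by rw [hsdef]; apply Real.sqrt_pos.mpr; positivity
    have hs2 : s^2 = 2*(m:ℝ)+2 := by
      rw [hsdef, Real.sq_sqrt (by positivity)]; push_cast; ring
    have hA : ((2*m).doubleFactorial : ℝ) = 2^m * m.factorial := by
      rw [Nat.doubleFactorial_two_mul]; push_cast; ring
    have hB : (((2*m+1).factorial) : ℝ)
        = ((2*m+1).doubleFactorial : ℝ) * ((2*m).doubleFactorial : ℝ) := by
      exact_mod_cast congrArg (Nat.cast (R:=ℝ)) (Nat.factorial_eq_mul_doubleFactorial (2*m))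
    have hC : (((2*m+1).choose m) : ℝ)
        = ((2*m+1).factorial : ℝ) / (m.factorial * (m+1).factorial) := by
      have h := Nat.cast_choose ℝ (show m ≤ 2*m+1 by omega)
      rwa [show 2*m+1-m = m+1 from by omega] at h
    have hdf0 : ((2*m).doubleFactorial : ℝ) ≠ 0 := by
      exact_mod_cast (Nat.doubleFactorial_pos _).ne'
    have hdf1 : ((2*m+1).doubleFactorial : ℝ) ≠ 0 := by
      exact_mod_cast (Nat.doubleFactorial_pos _).ne'
    have hfm : (m.factorial : ℝ) ≠ 0 := by exact_mod_cast m.factorial_ne_zero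
    have hfm1 : ((m+1).factorial : ℝ) ≠ 0 := by exact_mod_cast (m+1).factorial_ne_zero
    have hf2 : ((2*m+1).factorial : ℝ) ≠ 0 := by exact_mod_cast (2*m+1).factorial_ne_zero
    have hfact : ((m+1).factorial : ℝ) = ((m:ℝ)+1) * m.factorial := by
      rw [Nat.factorial_succ]; push_cast; ring
    rw [hC, hA]
    field_simp
    linear_combination (-((2*m+1).factorial:ℝ)*2^m)*hs2 +
      (-(2:ℝ)^m*(2*(m:ℝ)+2))*hB +
      (-(2:ℝ)^m*(2*(m:ℝ)+2)*((2*m+1).doubleFactorial:ℝ))*hA +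
      ((2:ℝ)^(2*m+1)*((2*m+1).doubleFactorial:ℝ))*hfact
end

section
/- For every natural number n and complex number a such that (2a)_k ≠ 0 for all 0 ≤ k ≤ n, the terminating hypergeometric sum ∑_{k=0}^{n} (-n)_k (a)_k 2^k / ((2a)_k k!) equals (1/2)_m / (a+1/2)_m when n = 2m is even, and 0 when n is odd. -/
open Finset

/-- The Pochhammer symbol (rising factorial) `(x)_k = x (x+1) ⋯ (x+k-1)`. -/
noncomputable def poch (x : ℂ) (k : ℕ) : ℂ := (ascPochhammer ℂ k).eval x

lemma poch_zero (x : ℂ) : poch x 0 = 1 := by simp [poch]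

lemma poch_succ (x : ℂ) (k : ℕ) : poch x (k + 1) = poch x k * (x + k) := by
  simp [poch, ascPochhammer_succ_right]

lemma poch_neg_nat (N k : ℕ) :
    poch (-(N : ℂ)) k = (-1) ^ k * (N.descFactorial k : ℂ) := by
  rw [poch, ascPochhammer_eval_neg_eq_descPochhammer,
    descPochhammer_eval_eq_descFactorial]

lemma poch_factor_ne (x : ℂ) : ∀ m : ℕ, poch x m ≠ 0 → ∀ k < m, x + k ≠ 0 := by
  intro m
  induction m with
  | zero => intro _ k hk; omega
  | succ m ih =>
    intro hm k hk
    rw [poch_succ] at hm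
    rcases Nat.lt_succ_iff_lt_or_eq.mp hk with h' | h'
    · exact ih (left_ne_zero_of_mul hm) k h'
    · subst h'; exact right_ne_zero_of_mul hm

lemma poch_half_ne (a : ℂ) {N m : ℕ} (hN : poch (2 * a) N ≠ 0) (hm : 2 * m ≤ N) :
    poch (a + 1 / 2) m ≠ 0 := by
  induction m with
  | zero => simp [poch_zero]
  | succ j ihj =>
    rw [poch_succ]
    refine mul_ne_zero (ihj (by omega)) ?_
    have h2 := poch_factor_ne (2 * a) N hN (2 * j + 1) (by omega)
    push_cast at h2
    intro hc
    apply h2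
    rw [show 2 * a + (2 * (j : ℂ) + 1) = 2 * (a + 1 / 2 + (j : ℂ)) from by ring, hc, mul_zero]

/-- one term of the hypergeometric sum -/
noncomputable def Fterm (n : ℕ) (a : ℂ) (k : ℕ) : ℂ :=
  poch (-(n : ℂ)) k * poch a k * 2 ^ k / (poch (2 * a) k * (k.factorial : ℂ))

lemma Fterm_eq_zero {n k : ℕ} (a : ℂ) (h : n < k) : Fterm n a k = 0 := by
  rw [Fterm, poch_neg_nat, Nat.descFactorial_eq_zero_iff_lt.mpr h]
  simp

/-- the Gosper/Zeilberger certificate term -/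
noncomputable def Gterm (n : ℕ) (a : ℂ) (k : ℕ) : ℂ :=
  if k ≤ n + 2 then
    (-1) ^ (k + 1) * ((n + 1).factorial : ℂ) * k * (2 * a + k - 1) * poch a k * 2 ^ k /
      (((n + 2 - k).factorial : ℂ) * poch (2 * a) k * (k.factorial : ℂ))
  else 0

set_option maxHeartbeats 1000000 in
lemma step (n : ℕ) (a : ℂ) (h : ∀ j ≤ n + 2, poch (2 * a) j ≠ 0)
    {k : ℕ} (hk : k ≤ n + 2) :
    (2 * a + n + 1) * Fterm (n + 2) a k - (n + 1) * Fterm n a k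
      = Gterm n a (k + 1) - Gterm n a k := by
  have hP : poch (2 * a) k ≠ 0 := h k hk
  have hK : ((k.factorial : ℂ)) ≠ 0 := Nat.cast_ne_zero.mpr (Nat.factorial_ne_zero k)
  rcases eq_or_lt_of_le hk with hk2 | hk1
  · -- k = n + 2
    subst hk2
    rw [show Fterm n a (n + 2) = 0 from Fterm_eq_zero a (by omega), Gterm, Gterm,
      if_neg (by omega), if_pos le_rfl, Fterm, poch_neg_nat, Nat.sub_self,
      Nat.descFactorial_self]
    have h1 : ((n + 2).factorial : ℂ) = ((n + 1).factorial : ℂ) * ((n : ℂ) + 2) := by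
      rw [show n + 2 = (n + 1) + 1 from rfl, Nat.factorial_succ (n + 1)]
      push_cast; ring
    have hF : ((n + 1).factorial : ℂ) ≠ 0 := Nat.cast_ne_zero.mpr (Nat.factorial_ne_zero _)
    rw [h1]
    push_cast
    field_simp
    ring_nf
  · -- k ≤ n + 1
    have hk1' : k ≤ n + 1 := by omega
    have hQ : ((n + 1 - k).factorial : ℂ) ≠ 0 :=
      Nat.cast_ne_zero.mpr (Nat.factorial_ne_zero _)
    have h2ak : 2 * a + k ≠ 0 := poch_factor_ne _ (n + 2) (h (n + 2) le_rfl) k (by omega)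
    have hn2k : ((n : ℂ) + 2 - k) ≠ 0 := by
      have e : ((n + 2 - k : ℕ) : ℂ) = (n : ℂ) + 2 - k := by
        push_cast [Nat.cast_sub hk]; ring
      rw [← e]
      exact Nat.cast_ne_zero.mpr (by omega)
    have hN : ((n.factorial : ℂ)) ≠ 0 := Nat.cast_ne_zero.mpr (Nat.factorial_ne_zero _)
    have e_fac2 : ((n + 2 - k).factorial : ℂ)
        = ((n : ℂ) + 2 - k) * ((n + 1 - k).factorial : ℂ) := by
      have e1 : n + 2 - k = (n + 1 - k) + 1 := by omega
      have e3 : ((n + 1 - k : ℕ) : ℂ) = (n : ℂ) + 1 - k := by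
        push_cast [Nat.cast_sub (by omega : k ≤ n + 1)]; ring
      rw [e1, Nat.factorial_succ]
      push_cast [e3]; ring
    have e_d2 : (((n + 2).descFactorial k : ℕ) : ℂ)
        = ((n : ℂ) + 2) * ((n : ℂ) + 1) * (n.factorial : ℂ)
            / (((n : ℂ) + 2 - k) * ((n + 1 - k).factorial : ℂ)) := by
      rw [eq_div_iff (by exact mul_ne_zero hn2k hQ), ← e_fac2]
      rw [← Nat.cast_mul, mul_comm ((n+2).descFactorial k), Nat.factorial_mul_descFactorial hk]
      rw [show n + 2 = (n + 1) + 1 from rfl, Nat.factorial_succ (n + 1), Nat.factorial_succ n]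
      push_cast; ring
    have e_d0 : ((n.descFactorial k : ℕ) : ℂ)
        = (n.factorial : ℂ) * ((n : ℂ) + 1 - k) / ((n + 1 - k).factorial : ℂ) := by
      rw [eq_div_iff hQ]
      rcases Nat.lt_or_ge n k with hnk | hnk
      · have hkn : k = n + 1 := by omega
        subst hkn
        rw [Nat.descFactorial_eq_zero_iff_lt.mpr (by omega)]
        push_cast; ring
      · have e1 : n + 1 - k = (n - k) + 1 := by omega
        have e2 : Nat.factorial (n - k) * n.descFactorial k = Nat.factorial n := Nat.factorial_mul_descFactorial hnk
        have e3 : ((n - k : ℕ) : ℂ) = (n : ℂ) - k := by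
          push_cast [Nat.cast_sub hnk]; ring
        rw [e1, Nat.factorial_succ]
        push_cast [← e2, e3]
        ring
    have e_facn1 : ((n + 1).factorial : ℂ) = ((n : ℂ) + 1) * (n.factorial : ℂ) := by
      rw [Nat.factorial_succ n]; push_cast; ring
    -- unfold everything
    rw [Fterm, Fterm, Gterm, Gterm, if_pos hk, if_pos (by omega : k + 1 ≤ n + 2),
      poch_neg_nat, poch_neg_nat]
    rw [poch_succ a k, poch_succ (2 * a) k, Nat.factorial_succ k,
      show n + 2 - (k + 1) = n + 1 - k from by omega]
    rw [e_d2, e_d0, e_fac2, e_facn1]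
    have hk1c : ((k : ℂ) + 1) ≠ 0 := by
      have : ((k + 1 : ℕ) : ℂ) ≠ 0 := Nat.cast_ne_zero.mpr (by omega)
      push_cast at this; exact this
    push_cast
    field_simp
    ring

lemma recur (n : ℕ) (a : ℂ) (h : ∀ j ≤ n + 2, poch (2 * a) j ≠ 0) :
    (2 * a + n + 1) * (∑ k ∈ range (n + 3), Fterm (n + 2) a k)
      = (n + 1) * ∑ k ∈ range (n + 1), Fterm n a k := by
  have hext : ∑ k ∈ range (n + 1), Fterm n a k = ∑ k ∈ range (n + 3), Fterm n a k := by
    refine Finset.sum_subset (by intro x hx; simp only [mem_range] at hx ⊢; omega) ?_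
    intro x hx hx2
    simp only [mem_range] at hx hx2
    exact Fterm_eq_zero a (by omega)
  rw [hext, Finset.mul_sum, Finset.mul_sum, ← sub_eq_zero, ← Finset.sum_sub_distrib]
  have : ∀ k ∈ range (n + 3),
      (2 * a + n + 1) * Fterm (n + 2) a k - (n + 1) * Fterm n a k
        = Gterm n a (k + 1) - Gterm n a k := by
    intro k hk
    exact step n a h (by simp at hk; omega)
  rw [Finset.sum_congr rfl this, Finset.sum_range_sub (Gterm n a)]
  rw [Gterm, Gterm, if_neg (by omega), if_pos (by omega)]
  simp

lemma main_aux : ∀ n : ℕ, ∀ a : ℂ, (∀ k ≤ n, poch (2 * a) k ≠ 0) →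
    (∀ m : ℕ, n = 2 * m →
      ∑ k ∈ range (n + 1), Fterm n a k = poch (1 / 2) m / poch (a + 1 / 2) m) ∧
    (Odd n → ∑ k ∈ range (n + 1), Fterm n a k = 0) := by
  intro n
  induction n using Nat.strong_induction_on with
  | _ n IH =>
    match n with
    | 0 =>
      intro a _
      constructor
      · intro m hm
        have hm0 : m = 0 := by omega
        subst hm0
        simp [Fterm, poch_zero]
      · intro hodd; exact absurd hodd (by decide)
    | 1 =>
      intro a h
      constructor
      · intro m hm; omega
      · intro _
        have h2a : 2 * a ≠ 0 := by
          have := poch_factor_ne (2 * a) 1 (h 1 le_rfl) 0 (by omega)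
          simpa using this
        rw [Finset.sum_range_succ, Finset.sum_range_one]
        simp only [Fterm]
        rw [poch_neg_nat, poch_neg_nat, poch_zero, poch_zero,
          show poch a 1 = a from by rw [show (1:ℕ) = 0 + 1 from rfl, poch_succ, poch_zero]; ring,
          show poch (2*a) 1 = 2*a from by
            rw [show poch (2*a) 1 = poch (2*a) (0+1) from rfl, poch_succ, poch_zero]; ring]
        simp only [Nat.descFactorial_zero, Nat.descFactorial_one, Nat.factorial_zero,
          Nat.factorial_one]
        push_cast
        have ha : a ≠ 0 := right_ne_zero_of_mul h2a
        field_simp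
        ring
    | (n + 2) =>
      intro a h
      have hrec := recur n a (fun j hj => h j hj)
      have h2an1 : 2 * a + (n : ℂ) + 1 ≠ 0 := by
        have := poch_factor_ne (2 * a) (n + 2) (h (n + 2) le_rfl) (n + 1) (by omega)
        push_cast at this
        convert this using 1
        ring
      have hIH := IH n (by omega) a (fun k hk => h k (by omega))
      have hS : ∑ k ∈ range (n + 3), Fterm (n + 2) a k
          = ((n : ℂ) + 1) * (∑ k ∈ range (n + 1), Fterm n a k) / (2 * a + n + 1) := by
        rw [eq_div_iff h2an1]
        linear_combination hrec
      constructor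
      · intro m hm
        have hm1 : 1 ≤ m := by omega
        obtain ⟨m', rfl⟩ : ∃ m', m = m' + 1 := ⟨m - 1, by omega⟩
        have hn : n = 2 * m' := by omega
        have hprev := hIH.1 m' hn
        have hpochne : poch (a + 1 / 2) m' ≠ 0 :=
          poch_half_ne a (h (n + 2) le_rfl) (by omega)
        have hfacne : a + 1 / 2 + (m' : ℂ) ≠ 0 := by
          have h2 : 2 * a + ((2 * m' + 1 : ℕ) : ℂ) ≠ 0 :=
            poch_factor_ne (2 * a) (n + 2) (h (n + 2) le_rfl) (2 * m' + 1) (by omega)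
          push_cast at h2
          intro hc
          apply h2
          rw [show 2 * a + (2 * (m':ℂ) + 1) = 2 * (a + 1/2 + m') from by ring, hc, mul_zero]
        show ∑ k ∈ range (n + 2 + 1), Fterm (n + 2) a k = _
        rw [show n + 2 + 1 = n + 3 from rfl, hS, hprev, poch_succ (1/2) m',
          poch_succ (a + 1/2) m']
        have hnc : (n : ℂ) = 2 * (m' : ℂ) := by exact_mod_cast congrArg (Nat.cast : ℕ → ℂ) hn
        rw [hnc]
        field_simp
        ring
      · intro hodd
        have hodd' : Odd n := by
          rcases hodd with ⟨t, ht⟩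
          exact ⟨t - 1, by omega⟩
        have hprev := hIH.2 hodd'
        show ∑ k ∈ range (n + 2 + 1), Fterm (n + 2) a k = 0
        rw [show n + 2 + 1 = n + 3 from rfl, hS, hprev]
        simp

theorem twoF1_neg_n_a_twoA (n : ℕ) (a : ℂ) (h : ∀ k ≤ n, poch (2 * a) k ≠ 0) :
    (∀ m : ℕ, n = 2 * m →
      ∑ k ∈ range (n + 1),
          poch (-(n : ℂ)) k * poch a k * 2 ^ k / (poch (2 * a) k * (k.factorial : ℂ))
        = poch (1 / 2) m / poch (a + 1 / 2) m) ∧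
    (Odd n →
      ∑ k ∈ range (n + 1),
          poch (-(n : ℂ)) k * poch a k * 2 ^ k / (poch (2 * a) k * (k.factorial : ℂ)) = 0) := by
  exact main_aux n a h
end

section
/- For every natural number n and complex number a with (2a-1)_k ≠ 0 for 0 ≤ k ≤ 2n, ∑_{k=0}^{2n} (-2n)_k (a)_k 2^k / ((2a-1)_k k!) = (1/2)_n / (a-1/2)_n. -/
open Finset

lemma poch_prod (x : ℂ) (k : ℕ) : poch x k = ∏ j ∈ range k, (x + j) := by
  induction k with
  | zero => simp [poch_zero]
  | succ k ih => rw [poch_succ, ih, prod_range_succ]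

lemma poch_add (x : ℂ) (m k : ℕ) : poch x (m + k) = poch x m * poch (x + m) k := by
  rw [poch_prod, poch_prod, poch_prod, prod_range_add]
  congr 1
  apply prod_congr rfl
  intro j _
  push_cast
  ring

lemma poch_two (x : ℂ) : poch x 2 = x * (x + 1) := by
  rw [show (2:ℕ) = 1 + 1 from rfl, poch_succ, poch_succ, poch_zero]
  push_cast
  ring

lemma poch_rel (x : ℂ) (k : ℕ) :
    poch x k * ((x + k) * (x + k + 1)) = x * (x + 1) * poch (x + 2) k := by
  have h1 : poch x (2 + k) = poch x k * ((x + k) * (x + k + 1)) := by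
    rw [Nat.add_comm, poch_add x k 2, poch_two]
  have h2 : poch x (2 + k) = x * (x + 1) * poch (x + 2) k := by
    rw [poch_add x 2 k, poch_two, show ((2:ℕ):ℂ) = 2 by norm_num]
  linear_combination h2 - h1

lemma poch_neg_nat_eq_zero {m k : ℕ} (h : m < k) : poch (-(m:ℂ)) k = 0 := by
  rw [poch_prod]
  exact prod_eq_zero (mem_range.2 h) (by simp)

noncomputable def tt (a x : ℂ) (k : ℕ) : ℂ :=
  poch x k * poch a k * 2 ^ k / (poch (2 * a - 1) k * (k.factorial : ℂ))

noncomputable def Mcert (a c k : ℂ) : ℂ :=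
  k * (k ^ 3 + (2 * a - 4 * c - 10) * k ^ 2 + (29 + 16 * c - 22 * a - 12 * a * c) * k
    + (-26 - 16 * c + 38 * a + 24 * a * c - 12 * a ^ 2 - 8 * a ^ 2 * c))

noncomputable def Ce2 (a c : ℂ) : ℂ := 4 * (c + 2) * (2 * c + 3) * (a + c + 1) * (2 * a + 2 * c + 1)
noncomputable def Ce1 (a c : ℂ) : ℂ :=
  -4 * (c + 2) * (2 * c + 3) * (2 * (c + 1) * (2 * c + 1) + a * (4 * c + 5))
noncomputable def Ce0 (a c : ℂ) : ℂ := 4 * (c + 2) * (2 * c + 3) * (c + 1) * (2 * c + 1)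

lemma tt_eq_zero_of_poch {x : ℂ} {k : ℕ} (hx : poch x k = 0) (a : ℂ) : tt a x k = 0 := by
  simp [tt, hx]

set_option maxHeartbeats 4000000 in
set_option maxRecDepth 8000 in
lemma perterm (a : ℂ) (n k : ℕ) (hk : k ≤ 2 * n + 4)
    (hfac : ∀ j : ℕ, j ≤ 2 * n + 3 → 2 * a - 1 + (j : ℂ) ≠ 0)
    (hD : poch (2 * a - 1) k ≠ 0) :
    Ce2 a n * tt a (-(2 * (n:ℂ) + 4)) k + Ce1 a n * tt a (-(2 * (n:ℂ) + 2)) k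
      + Ce0 a n * tt a (-(2 * (n:ℂ))) k
    = Mcert a n (k + 1) * tt a (-(2 * (n:ℂ) + 4)) (k + 1)
      - Mcert a n k * tt a (-(2 * (n:ℂ) + 4)) k := by
  set c : ℂ := (n : ℂ) with hc
  have h2n1 : (2 * c + 1) ≠ 0 := by
    have : ((2 * n + 1 : ℕ) : ℂ) ≠ 0 := Nat.cast_ne_zero.2 (by omega)
    rw [hc]; exact_mod_cast this
  have h2n2 : (2 * c + 2) ≠ 0 := by
    have : ((2 * n + 2 : ℕ) : ℂ) ≠ 0 := Nat.cast_ne_zero.2 (by omega)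
    rw [hc]; exact_mod_cast this
  have h2n3 : (2 * c + 3) ≠ 0 := by
    have : ((2 * n + 3 : ℕ) : ℂ) ≠ 0 := Nat.cast_ne_zero.2 (by omega)
    rw [hc]; exact_mod_cast this
  have h2n4 : (2 * c + 4) ≠ 0 := by
    have : ((2 * n + 4 : ℕ) : ℂ) ≠ 0 := Nat.cast_ne_zero.2 (by omega)
    rw [hc]; exact_mod_cast this
  rcases Nat.lt_or_ge k (2 * n + 4) with hlt | hge
  · -- main case : k ≤ 2n+3
    have hk3 : k ≤ 2 * n + 3 := by omega
    have hfk : 2 * a - 1 + (k : ℂ) ≠ 0 := hfac k hk3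
    have hK1 : ((k : ℂ) + 1) ≠ 0 := by
      have : ((k + 1 : ℕ) : ℂ) ≠ 0 := Nat.cast_ne_zero.2 (by omega)
      exact_mod_cast this
    have hFc : ((k.factorial : ℕ) : ℂ) ≠ 0 := Nat.cast_ne_zero.2 k.factorial_ne_zero
    -- relations between pochhammers at the three levels
    have hq1 : poch (-(2 * c + 2)) k
        = poch (-(2 * c + 4)) k * (((k:ℂ) - 2 * c - 4) * ((k:ℂ) - 2 * c - 3))
          / ((2 * c + 4) * (2 * c + 3)) := by
      have h := poch_rel (-(2 * c + 4)) k
      rw [show (-(2 * c + 4) + 2 : ℂ) = -(2 * c + 2) by ring] at h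
      rw [eq_div_iff (mul_ne_zero h2n4 h2n3)]
      linear_combination -h
    have hq0 : poch (-(2 * c)) k
        = poch (-(2 * c + 2)) k * (((k:ℂ) - 2 * c - 2) * ((k:ℂ) - 2 * c - 1))
          / ((2 * c + 2) * (2 * c + 1)) := by
      have h := poch_rel (-(2 * c + 2)) k
      rw [show (-(2 * c + 2) + 2 : ℂ) = -(2 * c) by ring] at h
      rw [eq_div_iff (mul_ne_zero h2n2 h2n1)]
      linear_combination -h
    set u : ℂ := tt a (-(2 * c + 4)) k with hu
    have e1 : tt a (-(2 * c + 2)) k * ((2 * c + 4) * (2 * c + 3))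
        = u * (((k:ℂ) - 2 * c - 4) * ((k:ℂ) - 2 * c - 3)) := by
      rw [hu, tt, tt, hq1]
      field_simp
    have e0 : tt a (-(2 * c)) k * ((2 * c + 4) * (2 * c + 3) * ((2 * c + 2) * (2 * c + 1)))
        = u * (((k:ℂ) - 2 * c - 4) * ((k:ℂ) - 2 * c - 3)
            * (((k:ℂ) - 2 * c - 2) * ((k:ℂ) - 2 * c - 1))) := by
      rw [hu, tt, tt, hq0, hq1]
      field_simp [show c + 1 ≠ 0 from fun h => h2n2 (by linear_combination 2 * h)]
    have e2 : tt a (-(2 * c + 4)) (k + 1) * ((2 * a - 1 + (k:ℂ)) * ((k:ℂ) + 1))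
        = u * (((k:ℂ) - 2 * c - 4) * (a + (k:ℂ)) * 2) := by
      rw [hu, tt, tt, poch_succ, poch_succ, poch_succ, Nat.factorial_succ, Nat.cast_mul,
        pow_succ]
      have hc4 : (-(2 * c + 4) + (k:ℂ)) = (k:ℂ) - 2 * c - 4 := by ring
      rw [hc4]
      field_simp
      push_cast
      ring
    have hZ : ((2 * c + 4) * (2 * c + 3) * ((2 * c + 2) * (2 * c + 1))
        * ((2 * a - 1 + (k:ℂ)) * ((k:ℂ) + 1))) ≠ 0 :=
      mul_ne_zero (mul_ne_zero (mul_ne_zero h2n4 h2n3) (mul_ne_zero h2n2 h2n1))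
        (mul_ne_zero hfk hK1)
    apply mul_left_cancel₀ hZ
    simp only [Ce2, Ce1, Ce0, Mcert]
    push_cast
    linear_combination
      (-4 * (c + 2) * (2 * c + 3) * (2 * (c + 1) * (2 * c + 1) + a * (4 * c + 5)) * ((2 * c + 2) * (2 * c + 1)) * ((2 * a - 1 + (k:ℂ)) * ((k:ℂ) + 1))) * e1
      + (4 * (c + 2) * (2 * c + 3) * (c + 1) * (2 * c + 1) * ((2 * a - 1 + (k:ℂ)) * ((k:ℂ) + 1))) * e0
      - ((((k:ℂ)+1) * (((k:ℂ)+1) ^ 3 + (2 * a - 4 * c - 10) * ((k:ℂ)+1) ^ 2 + (29 + 16 * c - 22 * a - 12 * a * c) * ((k:ℂ)+1)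
    + (-26 - 16 * c + 38 * a + 24 * a * c - 12 * a ^ 2 - 8 * a ^ 2 * c))) * ((2 * c + 4) * (2 * c + 3) * ((2 * c + 2) * (2 * c + 1)))) * e2
  · -- boundary case : k = 2n+4
    have hkeq : k = 2 * n + 4 := le_antisymm hk hge
    subst hkeq
    have hz1 : poch (-(2 * c + 2)) (2 * n + 4) = 0 := by
      rw [show (-(2 * c + 2) : ℂ) = -((2 * n + 2 : ℕ) : ℂ) by rw [hc]; push_cast; ring]
      exact poch_neg_nat_eq_zero (by omega)
    have hz0 : poch (-(2 * c)) (2 * n + 4) = 0 := by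
      rw [show (-(2 * c) : ℂ) = -((2 * n : ℕ) : ℂ) by rw [hc]; push_cast; ring]
      exact poch_neg_nat_eq_zero (by omega)
    have hz2 : poch (-(2 * c + 4)) (2 * n + 4 + 1) = 0 := by
      rw [show (-(2 * c + 4) : ℂ) = -((2 * n + 4 : ℕ) : ℂ) by rw [hc]; push_cast; ring]
      exact poch_neg_nat_eq_zero (by omega)
    rw [tt_eq_zero_of_poch hz1, tt_eq_zero_of_poch hz0, tt_eq_zero_of_poch hz2]
    have hA : Ce2 a c + Mcert a c ((2 * n + 4 : ℕ) : ℂ) = 0 := by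
      rw [hc]; push_cast [Ce2, Mcert]; ring
    push_cast at hA ⊢
    linear_combination (tt a (-(2 * c + 4)) (2 * n + 4)) * hA

lemma poch_one (x : ℂ) : poch x 1 = x := by
  rw [show (1:ℕ) = 0 + 1 from rfl, poch_succ, poch_zero]
  push_cast; ring

lemma tt_nat_zero (a : ℂ) (r j : ℕ) (h : r < j) : tt a (-(r:ℂ)) j = 0 :=
  tt_eq_zero_of_poch (poch_neg_nat_eq_zero h) a

set_option maxHeartbeats 1000000 in
lemma sum_rec (a : ℂ) (n : ℕ)
    (hfac : ∀ j : ℕ, j ≤ 2 * n + 3 → 2 * a - 1 + (j : ℂ) ≠ 0)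
    (hD : ∀ j ≤ 2 * n + 4, poch (2 * a - 1) j ≠ 0) :
    Ce2 a n * (∑ k ∈ range (2 * n + 5), tt a (-(2 * (n:ℂ) + 4)) k)
      + Ce1 a n * (∑ k ∈ range (2 * n + 3), tt a (-(2 * (n:ℂ) + 2)) k)
      + Ce0 a n * (∑ k ∈ range (2 * n + 1), tt a (-(2 * (n:ℂ))) k) = 0 := by
  have hx1 : (-(2 * (n:ℂ) + 2)) = -((2 * n + 2 : ℕ) : ℂ) := by push_cast; ring
  have hx0 : (-(2 * (n:ℂ))) = -((2 * n : ℕ) : ℂ) := by push_cast; ring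
  have hx2 : (-(2 * (n:ℂ) + 4)) = -((2 * n + 4 : ℕ) : ℂ) := by push_cast; ring
  have h1ext : ∑ k ∈ range (2 * n + 5), tt a (-(2 * (n:ℂ) + 2)) k
      = ∑ k ∈ range (2 * n + 3), tt a (-(2 * (n:ℂ) + 2)) k := by
    rw [show 2 * n + 5 = 2 * n + 3 + 1 + 1 from by omega, sum_range_succ, sum_range_succ,
      hx1, tt_nat_zero a _ _ (by omega), tt_nat_zero a _ _ (by omega)]
    simp
  have h0ext : ∑ k ∈ range (2 * n + 5), tt a (-(2 * (n:ℂ))) k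
      = ∑ k ∈ range (2 * n + 1), tt a (-(2 * (n:ℂ))) k := by
    rw [show 2 * n + 5 = 2 * n + 1 + 1 + 1 + 1 + 1 from by omega, sum_range_succ,
      sum_range_succ, sum_range_succ, sum_range_succ, hx0,
      tt_nat_zero a _ _ (by omega), tt_nat_zero a _ _ (by omega),
      tt_nat_zero a _ _ (by omega), tt_nat_zero a _ _ (by omega)]
    simp
  rw [← h1ext, ← h0ext, mul_sum, mul_sum, mul_sum, ← sum_add_distrib, ← sum_add_distrib]
  have per : ∀ k ∈ range (2 * n + 5),
      Ce2 a n * tt a (-(2 * (n:ℂ) + 4)) k + Ce1 a n * tt a (-(2 * (n:ℂ) + 2)) k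
        + Ce0 a n * tt a (-(2 * (n:ℂ))) k
      = (fun j : ℕ => Mcert a n j * tt a (-(2 * (n:ℂ) + 4)) j) (k + 1)
        - (fun j : ℕ => Mcert a n j * tt a (-(2 * (n:ℂ) + 4)) j) k := by
    intro k hk
    have hk' : k ≤ 2 * n + 4 := by
      have := mem_range.mp hk; omega
    have h := perterm a n k hk' hfac (hD k hk')
    simpa using h
  rw [sum_congr rfl per, Finset.sum_range_sub (fun j : ℕ => Mcert a n j * tt a (-(2 * (n:ℂ) + 4)) j)]
  have hz : tt a (-(2 * (n:ℂ) + 4)) (2 * n + 5) = 0 := by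
    rw [hx2]; exact tt_nat_zero a _ _ (by omega)
  rw [hz, mul_zero, zero_sub, neg_eq_zero]
  norm_num [Mcert]

lemma base0 (a : ℂ) : ∑ k ∈ range (2 * 0 + 1), tt a (-(2 * ((0:ℕ):ℂ))) k
    = poch (1/2) 0 / poch (a - 1/2) 0 := by
  simp [tt, poch_zero]

lemma base1 (a : ℂ) (h : ∀ k ≤ 2 * 1, poch (2 * a - 1) k ≠ 0) :
    ∑ k ∈ range (2 * 1 + 1), tt a (-(2 * ((1:ℕ):ℂ))) k
    = poch (1/2) 1 / poch (a - 1/2) 1 := by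
  have h2a1 : 2 * a - 1 ≠ 0 := by
    have h' := h 1 (by omega)
    rwa [poch_one] at h'
  have h2a : 2 * a ≠ 0 := by
    have h' := h 2 (by omega)
    rw [poch_two] at h'
    have := (mul_ne_zero_iff.mp h').2
    intro hcon; exact this (by linear_combination hcon)
  have ha12 : a - 1/2 ≠ 0 := by
    intro hcon; exact h2a1 (by linear_combination 2 * hcon)
  rw [show 2 * 1 + 1 = 0+1+1+1 from rfl, sum_range_succ, sum_range_succ, sum_range_succ,
    sum_range_zero]
  have hA : (-1 + a * 2 : ℂ) ≠ 0 := by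
    intro hc; exact h2a1 (by linear_combination hc)
  simp only [tt, poch_succ, poch_zero, Nat.factorial, zero_add]
  push_cast
  simp only [add_zero, mul_zero, sub_add_cancel]
  field_simp [right_ne_zero_of_mul h2a]
  ring

set_option maxHeartbeats 1000000 in
lemma step_s4 (a : ℂ) (m : ℕ)
    (ihm : (∀ k ≤ 2 * m, poch (2 * a - 1) k ≠ 0) →
      ∑ k ∈ range (2 * m + 1), tt a (-(2 * ((m:ℕ):ℂ))) k = poch (1/2) m / poch (a - 1/2) m)
    (ihm1 : (∀ k ≤ 2 * (m+1), poch (2 * a - 1) k ≠ 0) →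
      ∑ k ∈ range (2 * (m+1) + 1), tt a (-(2 * (((m+1):ℕ):ℂ))) k
        = poch (1/2) (m+1) / poch (a - 1/2) (m+1))
    (h2 : ∀ k ≤ 2 * (m+2), poch (2 * a - 1) k ≠ 0) :
    ∑ k ∈ range (2 * (m+2) + 1), tt a (-(2 * (((m+2):ℕ):ℂ))) k
      = poch (1/2) (m+2) / poch (a - 1/2) (m+2) := by
  have hD : ∀ j ≤ 2 * m + 4, poch (2 * a - 1) j ≠ 0 := fun j hj => h2 j (by omega)
  have hfac : ∀ j : ℕ, j ≤ 2 * m + 3 → 2 * a - 1 + (j : ℂ) ≠ 0 := by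
    intro j hj
    have h' := h2 (j + 1) (by omega)
    rw [poch_succ] at h'
    exact (mul_ne_zero_iff.mp h').2
  -- nonzero facts
  have hfx : ∀ j : ℕ, j ≤ 2 * m + 3 → ∀ z : ℂ, 2 * z = 2 * a - 1 + (j:ℂ) → z ≠ 0 := by
    intro j hj z hz hcon
    exact hfac j hj (by rw [← hz, hcon, mul_zero])
  have hq1 : a - 1/2 + (m:ℂ) ≠ 0 :=
    hfx (2*m) (by omega) _ (by push_cast; ring)
  have hq2 : a - 1/2 + (m:ℂ) + 1 ≠ 0 :=
    hfx (2*m+2) (by omega) _ (by push_cast; ring)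
  have hq3 : 2 * a + 2 * (m:ℂ) + 1 ≠ 0 := by
    have := hfac (2*m+2) (by omega)
    intro hcon; exact this (by push_cast; linear_combination hcon)
  have hq4 : a + (m:ℂ) + 1 ≠ 0 :=
    hfx (2*m+3) (by omega) _ (by push_cast; ring)
  have hm2 : ((m:ℂ) + 2) ≠ 0 := by
    have : ((m + 2 : ℕ) : ℂ) ≠ 0 := Nat.cast_ne_zero.2 (by omega)
    exact_mod_cast this
  have hm3 : (2 * (m:ℂ) + 3) ≠ 0 := by
    have : ((2 * m + 3 : ℕ) : ℂ) ≠ 0 := Nat.cast_ne_zero.2 (by omega)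
    exact_mod_cast this
  have hCe2 : Ce2 a m ≠ 0 := by
    rw [Ce2]
    exact mul_ne_zero (mul_ne_zero (mul_ne_zero (mul_ne_zero (by norm_num) hm2) hm3)
      hq4) (by intro hcon; exact hq3 (by linear_combination hcon))
  have hpa : poch (a - 1/2) m ≠ 0 := by
    rw [poch_prod]
    refine prod_ne_zero_iff.mpr ?_
    intro j hj
    exact hfx (2*j) (by have := mem_range.mp hj; omega) _ (by push_cast; ring)
  -- the recurrence
  have hrec := sum_rec a m hfac hD
  -- identify the three sums
  have c1 : (-(2 * (m:ℂ) + 2)) = -(2 * (((m+1):ℕ):ℂ)) := by push_cast; ring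
  have c2 : (-(2 * (m:ℂ) + 4)) = -(2 * (((m+2):ℕ):ℂ)) := by push_cast; ring
  rw [c1, c2, show 2 * m + 3 = 2 * (m+1) + 1 from by omega,
    show 2 * m + 5 = 2 * (m+2) + 1 from by omega,
    ihm (fun k hk => h2 k (by omega)), ihm1 (fun k hk => h2 k (by omega))] at hrec
  have pr : ∀ x : ℂ, poch x (m+2) = poch x m * ((x + (m:ℂ)) * (x + (m:ℂ) + 1)) := by
    intro x; rw [poch_add, poch_two]
  have pr1 : ∀ x : ℂ, poch x (m+1) = poch x m * (x + (m:ℂ)) := fun x => poch_succ x m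
  have S2 : ∑ k ∈ range (2 * (m+2) + 1), tt a (-(2 * (((m+2):ℕ):ℂ))) k
      = (-(Ce1 a m * (poch (1/2) (m+1) / poch (a - 1/2) (m+1))
          + Ce0 a m * (poch (1/2) m / poch (a - 1/2) m))) / Ce2 a m := by
    rw [eq_div_iff hCe2]
    linear_combination hrec
  rw [S2, pr, pr, pr1, pr1]
  have hD2 : poch (a - 1/2) m * ((a - 1/2 + (m:ℂ)) * (a - 1/2 + (m:ℂ) + 1)) ≠ 0 :=
    mul_ne_zero hpa (mul_ne_zero hq1 hq2)
  have g1 : poch (1/2) m * (1/2 + (m:ℂ)) / (poch (a - 1/2) m * (a - 1/2 + (m:ℂ)))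
      = poch (1/2) m * (1/2 + (m:ℂ)) * (a - 1/2 + (m:ℂ) + 1)
        / (poch (a - 1/2) m * ((a - 1/2 + (m:ℂ)) * (a - 1/2 + (m:ℂ) + 1))) := by
    rw [div_eq_div_iff (mul_ne_zero hpa hq1) hD2]; ring
  have g0 : poch (1/2) m / poch (a - 1/2) m
      = poch (1/2) m * ((a - 1/2 + (m:ℂ)) * (a - 1/2 + (m:ℂ) + 1))
        / (poch (a - 1/2) m * ((a - 1/2 + (m:ℂ)) * (a - 1/2 + (m:ℂ) + 1))) := by
    rw [div_eq_div_iff hpa hD2]; ring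
  rw [g1, g0, ← mul_div_assoc, ← mul_div_assoc, ← add_div, ← neg_div, div_div,
    div_eq_div_iff (mul_ne_zero hD2 hCe2) hD2]
  simp only [Ce2, Ce1, Ce0]
  ring

theorem twoF1_neg2n_a_twoAm1 (n : ℕ) (a : ℂ) (h : ∀ k ≤ 2 * n, poch (2 * a - 1) k ≠ 0) :
    ∑ k ∈ range (2 * n + 1),
        poch (-(2 * n : ℂ)) k * poch a k * 2 ^ k / (poch (2 * a - 1) k * (k.factorial : ℂ))
      = poch (1 / 2) n / poch (a - 1 / 2) n := by
  have key : ∀ m : ℕ,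
      ((∀ k ≤ 2 * m, poch (2 * a - 1) k ≠ 0) →
        ∑ k ∈ range (2 * m + 1), tt a (-(2 * ((m:ℕ):ℂ))) k = poch (1/2) m / poch (a - 1/2) m)
      ∧ ((∀ k ≤ 2 * (m+1), poch (2 * a - 1) k ≠ 0) →
        ∑ k ∈ range (2 * (m+1) + 1), tt a (-(2 * (((m+1):ℕ):ℂ))) k
          = poch (1/2) (m+1) / poch (a - 1/2) (m+1)) := by
    intro m
    induction m with
    | zero => exact ⟨fun _ => base0 a, base1 a⟩
    | succ m ih => exact ⟨ih.2, step_s4 a m ih.1 ih.2⟩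
  have := (key n).1 h
  simpa only [tt] using this
end
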